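/- arXiv:1908.07711 — 2 statements merged into one kernel-verified Lean document; each statement's English description precedes it below -/
import Mathlib

section
/- For every z ∈ ℂ with |z| ≥ 1, the function φ_r satisfies the functional equation φ_r(z^d) = d · z^{d−1} · φ_r(z) + z^r. -/
/-- The first-order coefficient function
`φ_r(z) = −z Σ_{k≥1} d^{−k} z^{−d^{k−1}(d−r)}` of the conjugacy `Φ_P` between
`Q(z) = z^d` and `P`. -/
noncomputable def phi (d r : ℕ) (z : ℂ) : ℂ :=
  - z * ∑' k : ℕ, ((d : ℂ) ^ (k + 1))⁻¹ * (z ^ (d ^ k * (d - r)))⁻¹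

/-- For `|z| ≥ 1`, the functional equation `φ_r(z^d) = d z^{d−1} φ_r(z) + z^r` holds. -/
theorem phi_functional_equation (d r : ℕ) (hd : 2 ≤ d) (hr : r ≤ d - 2)
    (z : ℂ) (hz : 1 ≤ ‖z‖) :
    phi d r (z ^ d) = (d : ℂ) * z ^ (d - 1) * phi d r z + z ^ r := by
  have hz0 : z ≠ 0 := by
    intro h; rw [h] at hz; simp at hz; linarith
  have hd0 : (d : ℂ) ≠ 0 := Nat.cast_ne_zero.mpr (by omega)
  set f : ℕ → ℂ := fun k => ((d : ℂ) ^ k)⁻¹ * (z ^ (d ^ k * (d - r)))⁻¹ with hf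
  have hz1 : (1 : ℝ) ≤ ‖z‖ := hz
  have hsum : Summable f := by
    apply Summable.of_norm_bounded (g := fun k => ((d : ℝ)⁻¹) ^ k)
    · apply summable_geometric_of_lt_one (by positivity)
      rw [inv_lt_one_iff₀]; right; exact_mod_cast by omega
    · intro k
      rw [hf]
      simp only [norm_mul, norm_inv, norm_pow, Complex.norm_natCast]
      calc ((d:ℝ) ^ k)⁻¹ * (‖z‖ ^ (d ^ k * (d - r)))⁻¹
          ≤ ((d:ℝ) ^ k)⁻¹ * 1 := by
            apply mul_le_mul_of_nonneg_left _ (by positivity)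
            rw [inv_le_one_iff₀]; right; exact one_le_pow₀ hz1
        _ = ((d:ℝ)⁻¹) ^ k := by rw [mul_one, inv_pow]
  have h1 : phi d r (z ^ d) = -z ^ d * ∑' k : ℕ, f (k + 1) := by
    rw [phi]
    congr 1
    apply tsum_congr
    intro k
    rw [hf]
    simp only
    congr 2
    rw [← pow_mul]
    congr 1
    rw [pow_succ]
    ring
  have h2 : (d : ℂ) * z ^ (d - 1) * phi d r z = -z ^ d * ∑' k : ℕ, f k := by
    rw [phi]
    have hpow : z ^ (d - 1) * z = z ^ d := by
      rw [← pow_succ]; congr 1; omega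
    have hT : ∑' k : ℕ, f k = (d : ℂ) * ∑' k : ℕ, ((d : ℂ) ^ (k + 1))⁻¹ * (z ^ (d ^ k * (d - r)))⁻¹ := by
      rw [← tsum_mul_left]
      apply tsum_congr
      intro k
      rw [hf]
      simp only
      rw [pow_succ]
      field_simp
    rw [hT]
    calc (d : ℂ) * z ^ (d - 1) * (-z * ∑' k : ℕ, ((d : ℂ) ^ (k + 1))⁻¹ * (z ^ (d ^ k * (d - r)))⁻¹)
        = -(z ^ (d - 1) * z) * ((d : ℂ) * ∑' k : ℕ, ((d : ℂ) ^ (k + 1))⁻¹ * (z ^ (d ^ k * (d - r)))⁻¹) := by ring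
      _ = _ := by rw [hpow]
  have h0 : z ^ d * f 0 = z ^ r := by
    rw [hf]
    simp only [pow_zero, one_mul, inv_one]
    have : z ^ d = z ^ r * z ^ (d - r) := by
      rw [← pow_add]; congr 1; omega
    rw [this]
    field_simp
  rw [h1, h2, Summable.tsum_eq_zero_add hsum]
  linear_combination h0
end

section
/- Let d ≥ 2 be an integer and let g : S¹ → ℂ be a continuous function on the unit circle S¹ = {z ∈ ℂ : |z| = 1}. Then there exists exactly one continuous function φ : S¹ → ℂ such that φ(z^d) = d · z^{d−1} · φ(z) + g(z) for every z ∈ S¹. -/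
/-- For `d ≥ 2` and a continuous `g` on the unit circle, there exists exactly one
continuous `φ` on the unit circle satisfying the linearized conjugacy equation
`φ(z^d) = d z^{d−1} φ(z) + g(z)` for every `z` on the circle. -/
theorem linearized_conjugacy_equation_unique_solution (d : ℕ) (hd : 2 ≤ d)
    (g : ℂ → ℂ) (hg : ContinuousOn g {z : ℂ | ‖z‖ = 1}) :
    ∃! φ : {z : ℂ // ‖z‖ = 1} → ℂ, Continuous φ ∧
      ∀ z : {z : ℂ // ‖z‖ = 1},
        φ ⟨(z : ℂ) ^ d, by rw [norm_pow, z.prop, one_pow]⟩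
          = (d : ℂ) * (z : ℂ) ^ (d - 1) * φ z + g (z : ℂ) := by
  have hcs : IsCompact {z : ℂ | ‖z‖ = 1} := by
    have h : {z : ℂ | ‖z‖ = 1} = Metric.sphere (0 : ℂ) 1 := by
      ext z; simp [dist_zero_right]
    rw [h]; exact isCompact_sphere 0 1
  haveI : CompactSpace {z : ℂ // ‖z‖ = 1} := isCompact_iff_compactSpace.mp hcs
  set S := {z : ℂ // ‖z‖ = 1}
  have hpowmem : ∀ z : S, ‖(z : ℂ) ^ d‖ = 1 := fun z => by
    rw [norm_pow, z.prop, one_pow]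
  set p : S → S := fun z => ⟨(z : ℂ) ^ d, hpowmem z⟩ with hp
  have hpc : Continuous p :=
    Continuous.subtype_mk (continuous_subtype_val.pow d) _
  have hdnz : (d : ℂ) ≠ 0 := Nat.cast_ne_zero.mpr (by omega)
  have hznz : ∀ z : S, (z : ℂ) ≠ 0 := fun z => by
    intro h; have := z.prop; rw [h] at this; simp at this
  have hden : ∀ z : S, (d : ℂ) * (z : ℂ) ^ (d - 1) ≠ 0 := fun z =>
    mul_ne_zero hdnz (pow_ne_zero _ (hznz z))
  have hdennorm : ∀ z : S, ‖(d : ℂ) * (z : ℂ) ^ (d - 1)‖ = (d : ℝ) := fun z => by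
    rw [norm_mul, norm_pow, z.prop, one_pow, mul_one, Complex.norm_natCast]
  have hgr : Continuous (fun z : S => g (z : ℂ)) := hg.restrict
  set T : C(S, ℂ) → C(S, ℂ) := fun φ =>
    ⟨fun z => (φ (p z) - g (z : ℂ)) / ((d : ℂ) * (z : ℂ) ^ (d - 1)), by
      apply Continuous.div
      · exact (φ.continuous.comp hpc).sub hgr
      · exact continuous_const.mul (continuous_subtype_val.pow (d - 1))
      · exact hden⟩ with hT
  have hdpos : (0 : ℝ) < (d : ℝ) := by positivity
  -- key equivalence: φ is a fixed point of T iff it satisfies the equation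
  have hfix : ∀ φ : C(S, ℂ), T φ = φ ↔
      ∀ z : S, φ (p z) = (d : ℂ) * (z : ℂ) ^ (d - 1) * φ z + g (z : ℂ) := by
    intro φ
    constructor
    · intro h z
      have := congrFun (congrArg DFunLike.coe h) z
      simp only [hT, ContinuousMap.coe_mk] at this
      rw [div_eq_iff (hden z)] at this
      linear_combination this
    · intro h
      ext z
      simp only [hT, ContinuousMap.coe_mk]
      rw [h z, div_eq_iff (hden z)]
      ring
  -- contraction
  have hlip : ∀ φ ψ : C(S, ℂ), dist (T φ) (T ψ) ≤ (d : ℝ)⁻¹ * dist φ ψ := by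
    intro φ ψ
    refine (ContinuousMap.dist_le (by positivity)).mpr fun z => ?_
    simp only [hT, ContinuousMap.coe_mk]
    rw [dist_eq_norm, div_sub_div_same, sub_sub_sub_cancel_right, norm_div,
      hdennorm z]
    rw [div_eq_inv_mul]
    gcongr
    rw [← dist_eq_norm]
    exact ContinuousMap.dist_apply_le_dist (p z)
  have hcontr : ContractingWith ((d : NNReal))⁻¹ T := by
    constructor
    · exact inv_lt_one_of_one_lt₀ (by exact_mod_cast (by omega : 1 < d))
    · exact LipschitzWith.of_dist_le_mul (fun φ ψ => by
        simpa using hlip φ ψ)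
  set φ₀ : C(S, ℂ) := hcontr.fixedPoint T with hφ₀
  have hφ₀fix : T φ₀ = φ₀ := hcontr.fixedPoint_isFixedPt
  refine ⟨φ₀, ⟨φ₀.continuous, (hfix φ₀).mp hφ₀fix⟩, ?_⟩
  rintro ψ ⟨hψc, hψeq⟩
  have : (⟨ψ, hψc⟩ : C(S, ℂ)) = φ₀ :=
    hcontr.fixedPoint_unique ((hfix ⟨ψ, hψc⟩).mpr hψeq)
  exact congrArg DFunLike.coe this
end
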